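/- Let q be a prime power, N ≥ 2, and 1 ≤ i ≤ N−1. Let e_1, …, e_N denote the standard basis of 𝔽_q^N. Define three complete flags: S1 with S1^j = span(e_1, …, e_j); S2 with S2^j = S1^j for j ≠ i and S2^i = span(e_1, …, e_{i−1}, e_{i+1}); and S3 with S3^j = S1^j for j ≠ i and S3^i = span(e_1, …, e_{i−1}, e_i + e_{i+1}). Then the subgroup of GL_N(𝔽_q) consisting of all g that stabilize all three flags (i.e., g(Sm^j) = Sm^j for all m, j) has cardinality (q−1)^{N−1} · q^{N(N−1)/2 − 1}. -/

import Mathlib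

open Submodule

/-- The `m`-th standard basis vector of `K^N` (1-based: `stdVec K N m = e_m` for
`1 ≤ m ≤ N`, and `0` otherwise). -/
def stdVec (K : Type*) [Field K] (N m : ℕ) : Fin N → K :=
  fun l => if (l : ℕ) + 1 = m then 1 else 0

/-- The standard flag: `S1 K N j = span(e_1, …, e_j)`. -/
def S1 (K : Type*) [Field K] (N j : ℕ) : Submodule K (Fin N → K) :=
  Submodule.span K {v | ∃ m, 1 ≤ m ∧ m ≤ j ∧ v = stdVec K N m}

/-- The flag `S2`, agreeing with `S1` in all degrees except degree `i`, where
`S2^i = span(e_1, …, e_{i-1}, e_{i+1})`. -/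
def S2 (K : Type*) [Field K] (N i j : ℕ) : Submodule K (Fin N → K) :=
  if j = i then
    Submodule.span K
      ({v | ∃ m, 1 ≤ m ∧ m ≤ i - 1 ∧ v = stdVec K N m} ∪ {stdVec K N (i + 1)})
  else S1 K N j

/-- The flag `S3`, agreeing with `S1` in all degrees except degree `i`, where
`S3^i = span(e_1, …, e_{i-1}, e_i + e_{i+1})`. -/
def S3 (K : Type*) [Field K] (N i j : ℕ) : Submodule K (Fin N → K) :=
  if j = i then
    Submodule.span K
      ({v | ∃ m, 1 ≤ m ∧ m ≤ i - 1 ∧ v = stdVec K N m} ∪ {stdVec K N i + stdVec K N (i + 1)})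
  else S1 K N j

section
variable {K : Type*} [Field K] {N : ℕ}

lemma stdVec_apply (m : ℕ) (l : Fin N) :
    stdVec K N m l = if (l : ℕ) + 1 = m then 1 else 0 := rfl

lemma stdVec_single (l : Fin N) : stdVec K N ((l : ℕ) + 1) = Pi.single l 1 := by
  funext k
  rw [stdVec_apply]
  rcases eq_or_ne k l with h | h
  · subst h; simp
  · rw [if_neg (by simpa [Fin.val_inj] using h), Pi.single_eq_of_ne h]

lemma stdVec_zero_of_gt (m : ℕ) (l : Fin N) (h : m ≤ (l : ℕ)) : stdVec K N m l = 0 := by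
  rw [stdVec_apply, if_neg (by omega)]

lemma stdVec_ne (m : ℕ) (l : Fin N) (h : (l : ℕ) + 1 ≠ m) : stdVec K N m l = 0 := by
  rw [stdVec_apply, if_neg h]

lemma stdVec_eq (m : ℕ) (l : Fin N) (h : (l : ℕ) + 1 = m) : stdVec K N m l = 1 := by
  rw [stdVec_apply, if_pos h]

lemma mem_span_low (j : ℕ) (v : Fin N → K) (hv : ∀ l : Fin N, j ≤ (l : ℕ) → v l = 0) :
    v ∈ Submodule.span K {v | ∃ m, 1 ≤ m ∧ m ≤ j ∧ v = stdVec K N m} := by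
  have : v = ∑ l : Fin N, v l • (Pi.single l 1 : Fin N → K) := by
    funext k; simp [Finset.sum_apply, Pi.single_apply]
  rw [this]
  refine Submodule.sum_mem _ fun l _ => ?_
  by_cases h : j ≤ (l : ℕ)
  · rw [hv l h, zero_smul]; exact Submodule.zero_mem _
  · exact Submodule.smul_mem _ _ (Submodule.subset_span
      ⟨(l : ℕ) + 1, by omega, by omega, (stdVec_single l).symm⟩)

lemma mem_S1_iff (j : ℕ) (v : Fin N → K) :
    v ∈ S1 K N j ↔ ∀ l : Fin N, j ≤ (l : ℕ) → v l = 0 := by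
  constructor
  · intro hv
    induction hv using Submodule.span_induction with
    | mem x hx =>
      obtain ⟨m, hm1, hm2, rfl⟩ := hx
      exact fun l hl => stdVec_zero_of_gt m l (by omega)
    | zero => simp
    | add x y _ _ hx hy => intro l hl; simp [hx l hl, hy l hl]
    | smul c x _ hx => intro l hl; simp [hx l hl]
  · exact mem_span_low j v

lemma mem_S2i_iff (i : ℕ) (hi1 : 1 ≤ i) (hi : i < N) (v : Fin N → K) :
    v ∈ S2 K N i i ↔ v ⟨i - 1, by omega⟩ = 0 ∧ ∀ l : Fin N, i + 1 ≤ (l : ℕ) → v l = 0 := by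
  rw [S2, if_pos rfl]
  constructor
  · intro hv
    induction hv using Submodule.span_induction with
    | mem x hx =>
      rcases hx with ⟨m, hm1, hm2, rfl⟩ | hx
      · exact ⟨stdVec_ne m _ (by simp; omega), fun l hl => stdVec_zero_of_gt m l (by omega)⟩
      · simp only [Set.mem_singleton_iff] at hx; subst hx
        exact ⟨stdVec_ne _ _ (by simp; omega), fun l hl => stdVec_ne _ l (by omega)⟩
    | zero => simp
    | add x y _ _ hx hy => exact ⟨by simp [hx.1, hy.1], fun l hl => by simp [hx.2 l hl, hy.2 l hl]⟩
    | smul c x _ hx => exact ⟨by simp [hx.1], fun l hl => by simp [hx.2 l hl]⟩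
  · rintro ⟨h1, h2⟩
    have hi1N : i < N := hi
    set i1 : Fin N := ⟨i, hi⟩ with hi1def
    have key : v - v i1 • stdVec K N (i + 1) ∈
        Submodule.span K {v | ∃ m, 1 ≤ m ∧ m ≤ i - 1 ∧ v = stdVec K N m} := by
      apply mem_span_low
      intro l hl
      rcases Nat.lt_or_ge (l : ℕ) i with h | h
      · have hli : (l : ℕ) = i - 1 := by omega
        have : l = ⟨i - 1, by omega⟩ := Fin.ext hli
        rw [this] at *
        simp only [Pi.sub_apply, Pi.smul_apply, smul_eq_mul]
        rw [h1, stdVec_ne (i+1) _ (by simp; omega)]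
        ring
      · rcases Nat.eq_or_lt_of_le h with h | h
        · have : l = i1 := Fin.ext h.symm
          subst this
          simp [stdVec_eq (i+1) i1 (by simp [hi1def])]
        · simp [h2 l (by omega), stdVec_ne (i+1) l (by omega)]
    have hv : v = (v - v i1 • stdVec K N (i + 1)) + v i1 • stdVec K N (i + 1) := by ring
    rw [hv]
    refine Submodule.add_mem _ (Submodule.span_mono Set.subset_union_left key) ?_
    exact Submodule.smul_mem _ _ (Submodule.subset_span (Set.mem_union_right _ rfl))

lemma mem_S3i_iff (i : ℕ) (hi1 : 1 ≤ i) (hi : i < N) (v : Fin N → K) :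
    v ∈ S3 K N i i ↔ v ⟨i - 1, by omega⟩ = v ⟨i, hi⟩ ∧
      ∀ l : Fin N, i + 1 ≤ (l : ℕ) → v l = 0 := by
  rw [S3, if_pos rfl]
  constructor
  · intro hv
    induction hv using Submodule.span_induction with
    | mem x hx =>
      rcases hx with ⟨m, hm1, hm2, rfl⟩ | hx
      · refine ⟨?_, fun l hl => stdVec_zero_of_gt m l (by omega)⟩
        rw [stdVec_ne m _ (by simp; omega), stdVec_ne m _ (by simp; omega)]
      · simp only [Set.mem_singleton_iff] at hx; subst hx
        constructor
        · have e1 : stdVec K N i (⟨i - 1, by omega⟩ : Fin N) = 1 := stdVec_eq _ _ (by simp; omega)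
          have e2 : stdVec K N (i+1) (⟨i - 1, by omega⟩ : Fin N) = 0 := stdVec_ne _ _ (by simp; omega)
          have e3 : stdVec K N i (⟨i, hi⟩ : Fin N) = 0 := stdVec_ne _ _ (by simp)
          have e4 : stdVec K N (i+1) (⟨i, hi⟩ : Fin N) = 1 := stdVec_eq _ _ (by simp)
          rw [Pi.add_apply, Pi.add_apply, e1, e2, e3, e4]; norm_num
        · intro l hl
          simp only [Pi.add_apply]
          rw [stdVec_ne i l (by omega), stdVec_ne (i+1) l (by omega), add_zero]
    | zero => simp
    | add x y _ _ hx hy => exact ⟨by simp [hx.1, hy.1], fun l hl => by simp [hx.2 l hl, hy.2 l hl]⟩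
    | smul c x _ hx => exact ⟨by simp [hx.1], fun l hl => by simp [hx.2 l hl]⟩
  · rintro ⟨h1, h2⟩
    set i1 : Fin N := ⟨i, hi⟩ with hi1def
    set g0 : Fin N → K := stdVec K N i + stdVec K N (i + 1) with hg0
    have key : v - v i1 • g0 ∈
        Submodule.span K {v | ∃ m, 1 ≤ m ∧ m ≤ i - 1 ∧ v = stdVec K N m} := by
      apply mem_span_low
      intro l hl
      rcases Nat.lt_or_ge (l : ℕ) i with h | h
      · have hli : (l : ℕ) = i - 1 := by omega
        have : l = ⟨i - 1, by omega⟩ := Fin.ext hli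
        rw [this] at *
        simp only [Pi.sub_apply, Pi.smul_apply, hg0, Pi.add_apply, smul_eq_mul]
        rw [stdVec_eq i _ (by simp; omega), stdVec_ne (i+1) _ (by simp; omega), h1]
        ring
      · rcases Nat.eq_or_lt_of_le h with h | h
        · have : l = i1 := Fin.ext h.symm
          subst this
          simp only [Pi.sub_apply, Pi.smul_apply, hg0, Pi.add_apply, smul_eq_mul]
          have e3 : stdVec K N i i1 = 0 := stdVec_ne _ _ (by simp [hi1def])
          have e4 : stdVec K N (i+1) i1 = 1 := stdVec_eq _ _ (by simp [hi1def])
          rw [e3, e4]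
          ring
        · simp only [Pi.sub_apply, Pi.smul_apply, hg0, Pi.add_apply, smul_eq_mul]
          rw [h2 l (by omega), stdVec_ne i l (by omega), stdVec_ne (i+1) l (by omega)]
          ring
    have hv : v = (v - v i1 • g0) + v i1 • g0 := by ring
    rw [hv]
    refine Submodule.add_mem _ (Submodule.span_mono Set.subset_union_left key) ?_
    exact Submodule.smul_mem _ _ (Submodule.subset_span (Set.mem_union_right _ rfl))

end

section
variable {K : Type*} [Field K] {N : ℕ}

lemma map_eq_self_of_le (g : (Fin N → K) ≃ₗ[K] (Fin N → K)) (p : Submodule K (Fin N → K))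
    (h : p.map g.toLinearMap ≤ p) : p.map g.toLinearMap = p := by
  refine Submodule.eq_of_le_of_finrank_le h ?_
  rw [LinearEquiv.finrank_map_eq]

lemma stdVec_eq_zero (m : ℕ) (hm : N < m) : (stdVec K N m : Fin N → K) = 0 := by
  funext l; exact stdVec_ne m l (by omega)

lemma stdVec_single' (m : ℕ) (hm1 : 1 ≤ m) (hmN : m ≤ N) :
    stdVec K N m = Pi.single (⟨m - 1, by omega⟩ : Fin N) 1 := by
  have := stdVec_single (K := K) (⟨m - 1, by omega⟩ : Fin N)
  simpa [Nat.sub_add_cancel hm1] using this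

lemma P_iff_Q (i : ℕ) (hi1 : 1 ≤ i) (hiN : i < N)
    (g : (Fin N → K) ≃ₗ[K] (Fin N → K)) :
    (∀ j : ℕ,
        Submodule.map g.toLinearMap (S1 K N j) = S1 K N j ∧
        Submodule.map g.toLinearMap (S2 K N i j) = S2 K N i j ∧
        Submodule.map g.toLinearMap (S3 K N i j) = S3 K N i j) ↔
      ((∀ k l : Fin N, (l : ℕ) < (k : ℕ) → g (Pi.single l 1) k = 0) ∧
        g (Pi.single (⟨i, hiN⟩ : Fin N) 1) ⟨i - 1, by omega⟩ = 0 ∧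
        g (Pi.single (⟨i - 1, by omega⟩ : Fin N) 1) ⟨i - 1, by omega⟩ =
          g (Pi.single (⟨i, hiN⟩ : Fin N) 1) ⟨i, hiN⟩) := by
  set i0 : Fin N := ⟨i - 1, by omega⟩ with hi0
  set i1 : Fin N := ⟨i, hiN⟩ with hi1'
  have hsv_i : stdVec K N i = Pi.single i0 1 := by
    rw [stdVec_single' i hi1 (by omega)]
  have hsv_i1 : stdVec K N (i + 1) = Pi.single i1 1 := by
    rw [stdVec_single' (i + 1) (by omega) (by omega)]
    exact congrArg (fun x => Pi.single x 1) (Fin.ext (by simp [hi1']))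
  constructor
  · intro hg
    have h1 : ∀ k l : Fin N, (l : ℕ) < (k : ℕ) → g (Pi.single l 1) k = 0 := by
      intro k l hlk
      have hmem : (Pi.single l 1 : Fin N → K) ∈ S1 K N ((l : ℕ) + 1) :=
        Submodule.subset_span ⟨(l : ℕ) + 1, by omega, le_refl _, (stdVec_single l).symm⟩
      have : g (Pi.single l 1) ∈ S1 K N ((l : ℕ) + 1) := by
        rw [← (hg ((l : ℕ) + 1)).1]
        exact Submodule.mem_map_of_mem hmem
      exact (mem_S1_iff _ _).mp this k (by omega)
    refine ⟨h1, ?_, ?_⟩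
    · have hmem : stdVec K N (i + 1) ∈ S2 K N i i := by
        rw [S2, if_pos rfl]
        exact Submodule.subset_span (Set.mem_union_right _ rfl)
      have : g (stdVec K N (i + 1)) ∈ S2 K N i i := by
        rw [← (hg i).2.1]; exact Submodule.mem_map_of_mem hmem
      have := ((mem_S2i_iff i hi1 hiN _).mp this).1
      rwa [hsv_i1] at this
    · have hmem : stdVec K N i + stdVec K N (i + 1) ∈ S3 K N i i := by
        rw [S3, if_pos rfl]
        exact Submodule.subset_span (Set.mem_union_right _ rfl)
      have : g (stdVec K N i + stdVec K N (i + 1)) ∈ S3 K N i i := by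
        rw [← (hg i).2.2]; exact Submodule.mem_map_of_mem hmem
      have heq := ((mem_S3i_iff i hi1 hiN _).mp this).1
      rw [map_add, hsv_i, hsv_i1, Pi.add_apply, Pi.add_apply] at heq
      have hz : g (Pi.single i0 1) i1 = 0 := h1 i1 i0 (by simp [hi0, hi1']; omega)
      have hz2 : g (Pi.single i1 1) i0 = 0 := by
        have := ((mem_S2i_iff i hi1 hiN _).mp (by
          rw [← (hg i).2.1]
          exact Submodule.mem_map_of_mem (by
            rw [S2, if_pos rfl]; exact Submodule.subset_span (Set.mem_union_right _ rfl)))).1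
        rwa [hsv_i1] at this
      rw [hz, hz2] at heq
      simpa using heq
  · rintro ⟨h1, h2, h3⟩
    -- derive: g (stdVec m) ∈ S1 K N j whenever 1 ≤ m ≤ j
    have key : ∀ m j : ℕ, 1 ≤ m → m ≤ j → g (stdVec K N m) ∈ S1 K N j := by
      intro m j hm1 hmj
      by_cases hmN : m ≤ N
      · rw [stdVec_single' m hm1 hmN, mem_S1_iff]
        intro l hl
        exact h1 l _ (by simp; omega)
      · rw [stdVec_eq_zero m (by omega), map_zero]
        exact Submodule.zero_mem _
    have hS1 : ∀ j, Submodule.map g.toLinearMap (S1 K N j) = S1 K N j := by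
      intro j
      apply map_eq_self_of_le
      rw [S1, Submodule.map_span, Submodule.span_le]
      rintro x ⟨v, ⟨m, hm1, hmj, rfl⟩, rfl⟩
      exact key m j hm1 hmj
    refine fun j => ⟨hS1 j, ?_, ?_⟩
    · by_cases hj : j = i
      · subst hj
        apply map_eq_self_of_le
        rw [S2, if_pos rfl, Submodule.map_span, Submodule.span_le]
        rintro x ⟨v, hv, rfl⟩
        have conv2 : ∀ x : Fin N → K, x ∈ S2 K N j j →
            x ∈ ↑(Submodule.span K
              ({v | ∃ m, 1 ≤ m ∧ m ≤ j - 1 ∧ v = stdVec K N m} ∪ {stdVec K N (j + 1)})) := by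
          intro x hx; rw [S2, if_pos rfl] at hx; exact hx
        rcases hv with ⟨m, hm1, hmj, rfl⟩ | hv
        · refine conv2 _ ?_
          rw [mem_S2i_iff j hi1 hiN]
          have hmem := key m (j - 1) hm1 hmj
          rw [mem_S1_iff] at hmem
          exact ⟨hmem i0 (by simp [hi0]), fun l hl => hmem l (by omega)⟩
        · simp only [Set.mem_singleton_iff] at hv; subst hv
          refine conv2 _ ?_
          rw [mem_S2i_iff j hi1 hiN, hsv_i1]
          exact ⟨h2, fun l hl => h1 l i1 (by simp [hi1']; omega)⟩
      · rw [S2, if_neg hj]; exact hS1 j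
    · by_cases hj : j = i
      · subst hj
        apply map_eq_self_of_le
        rw [S3, if_pos rfl, Submodule.map_span, Submodule.span_le]
        rintro x ⟨v, hv, rfl⟩
        have conv3 : ∀ x : Fin N → K, x ∈ S3 K N j j →
            x ∈ ↑(Submodule.span K
              ({v | ∃ m, 1 ≤ m ∧ m ≤ j - 1 ∧ v = stdVec K N m} ∪
                {stdVec K N j + stdVec K N (j + 1)})) := by
          intro x hx; rw [S3, if_pos rfl] at hx; exact hx
        rcases hv with ⟨m, hm1, hmj, rfl⟩ | hv
        · refine conv3 _ ?_
          rw [mem_S3i_iff j hi1 hiN]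
          have hmem := key m (j - 1) hm1 hmj
          rw [mem_S1_iff] at hmem
          refine ⟨?_, fun l hl => hmem l (by omega)⟩
          exact (hmem _ (by simp)).trans (hmem _ (by simpa using Nat.sub_le j 1)).symm
        · simp only [Set.mem_singleton_iff] at hv; subst hv
          refine conv3 _ ?_
          rw [mem_S3i_iff j hi1 hiN, map_add, hsv_i, hsv_i1]
          simp only [Pi.add_apply, LinearEquiv.coe_coe]
          constructor
          · show g (Pi.single i0 1) i0 + g (Pi.single i1 1) i0 =
              g (Pi.single i0 1) i1 + g (Pi.single i1 1) i1
            rw [h2, h3, h1 i1 i0 (by simp [hi0, hi1']; omega)]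
            ring
          · intro l hl
            show g (Pi.single i0 1) l + g (Pi.single i1 1) l = 0
            rw [h1 l i0 (by simp [hi0]; omega), h1 l i1 (by simp [hi1']; omega), add_zero]
      · rw [S3, if_neg hj]; exact hS1 j
end

section
variable {K : Type*} [Field K] [Fintype K] {N : ℕ}

lemma toMatrix'_entry (f : (Fin N → K) →ₗ[K] (Fin N → K)) (k l : Fin N) :
    LinearMap.toMatrix' f k l = f (Pi.single l 1) k := by
  rw [LinearMap.toMatrix'_apply]

lemma card_aux (i : ℕ) (hi1 : 1 ≤ i) (hiN : i < N) (hN : 2 ≤ N) :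
    Nat.card {g : (Fin N → K) ≃ₗ[K] (Fin N → K) //
        ∀ j : ℕ,
          Submodule.map g.toLinearMap (S1 K N j) = S1 K N j ∧
          Submodule.map g.toLinearMap (S2 K N i j) = S2 K N i j ∧
          Submodule.map g.toLinearMap (S3 K N i j) = S3 K N i j} =
      (Fintype.card K - 1) ^ (N - 1) * Fintype.card K ^ (N * (N - 1) / 2 - 1) := by
  classical
  set i0 : Fin N := ⟨i - 1, by omega⟩ with hi0def
  set i1 : Fin N := ⟨i, hiN⟩ with hi1def
  have hne01 : i0 ≠ i1 := by
    intro h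
    have := congrArg Fin.val h
    simp [hi0def, hi1def] at this
    omega
  have hlt01 : (i0 : ℕ) < (i1 : ℕ) := by simp [hi0def, hi1def]; omega
  -- the matrix model
  set T := {M : Matrix (Fin N) (Fin N) K //
      ((∀ k l : Fin N, (l : ℕ) < (k : ℕ) → M k l = 0) ∧ M i0 i1 = 0 ∧ M i0 i0 = M i1 i1) ∧
      ∀ k, M k k ≠ 0} with hT
  -- step 1 : the stabilizer is equivalent to T
  have e1 : {g : (Fin N → K) ≃ₗ[K] (Fin N → K) //
        ∀ j : ℕ,
          Submodule.map g.toLinearMap (S1 K N j) = S1 K N j ∧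
          Submodule.map g.toLinearMap (S2 K N i j) = S2 K N i j ∧
          Submodule.map g.toLinearMap (S3 K N i j) = S3 K N i j} ≃ T := by
    refine ⟨fun g => ⟨LinearMap.toMatrix' g.1.toLinearMap, ?_, ?_⟩,
      fun M => ⟨Matrix.toLinearEquiv' M.1 (Matrix.invertibleOfIsUnitDet _ ?_), ?_⟩, ?_, ?_⟩
    · -- Q conditions
      have hq := (P_iff_Q i hi1 hiN g.1).mp g.2
      refine ⟨fun k l h => ?_, ?_, ?_⟩
      · rw [toMatrix'_entry]; exact hq.1 k l h
      · rw [toMatrix'_entry]; exact hq.2.1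
      · rw [toMatrix'_entry, toMatrix'_entry]; exact hq.2.2
    · -- diagonal nonzero
      have hab : LinearMap.toMatrix' g.1.toLinearMap * LinearMap.toMatrix' g.1.symm.toLinearMap
          = 1 := by
        rw [← LinearMap.toMatrix'_comp]
        have : g.1.toLinearMap.comp g.1.symm.toLinearMap = LinearMap.id := by
          ext v : 1; simp
        rw [this, LinearMap.toMatrix'_id]
      have hU : IsUnit (LinearMap.toMatrix' g.1.toLinearMap) :=
        ⟨⟨_, _, hab, mul_eq_one_comm.mp hab⟩, rfl⟩
      have hdet := (Matrix.isUnit_iff_isUnit_det _).mp hU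
      have htri : (LinearMap.toMatrix' g.1.toLinearMap).BlockTriangular id := by
        intro k l h
        rw [toMatrix'_entry]
        exact ((P_iff_Q i hi1 hiN g.1).mp g.2).1 k l h
      rw [Matrix.det_of_upperTriangular htri] at hdet
      intro k
      exact Finset.prod_ne_zero_iff.mp hdet.ne_zero k (Finset.mem_univ k)
    · -- IsUnit det for invFun
      rw [Matrix.det_of_upperTriangular (fun k l h => M.2.1.1 k l h)]
      exact isUnit_iff_ne_zero.mpr (Finset.prod_ne_zero_iff.mpr fun k _ => M.2.2 k)
    · -- conditions of the linear equiv built from M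
      refine (P_iff_Q i hi1 hiN _).mpr ?_
      have hg : ∀ (h : Invertible (M.1 : Matrix (Fin N) (Fin N) K)) (k l : Fin N),
          (Matrix.toLinearEquiv' M.1 h) (Pi.single l 1) k = M.1 k l := by
        intro h k l
        show (Matrix.toLin' (M.1 : Matrix (Fin N) (Fin N) K)) (Pi.single l 1) k = M.1 k l
        rw [← toMatrix'_entry, LinearMap.toMatrix'_toLin']
      exact ⟨fun k l h => by rw [hg _]; exact M.2.1.1 k l h,
        by rw [hg _]; exact M.2.1.2.1, by rw [hg _, hg _]; exact M.2.1.2.2⟩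
    · -- left inverse
      intro g
      apply Subtype.ext
      apply LinearEquiv.toLinearMap_injective
      show (Matrix.toLin' (LinearMap.toMatrix' g.1.toLinearMap) : _) = g.1.toLinearMap
      rw [Matrix.toLin'_toMatrix']
    · -- right inverse
      intro M
      apply Subtype.ext
      show LinearMap.toMatrix' (Matrix.toLin' M.1) = M.1
      rw [LinearMap.toMatrix'_toLin']
  -- step 2 : T is equivalent to a product of diagonal data and strict upper data
  set U := ({p : Fin N × Fin N // (p.1 : ℕ) < (p.2 : ℕ) ∧ p ≠ (i0, i1)} → K) with hU
  set D := {d : Fin N → Kˣ // d i0 = d i1} with hD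
  have e2 : T ≃ D × U := by
    refine ⟨fun M => ⟨⟨fun k => Units.mk0 (M.1 k k) (M.2.2 k), ?_⟩, fun p => M.1 p.1.1 p.1.2⟩,
      fun du => ⟨fun k l =>
        if hkl : k = l then (du.1.1 k : K)
        else if h2 : (k : ℕ) < (l : ℕ) ∧ ((k, l) : Fin N × Fin N) ≠ (i0, i1) then du.2 ⟨(k, l), h2⟩
        else 0, ?_, ?_⟩, ?_, ?_⟩
    · exact Units.ext M.2.1.2.2
    · refine ⟨fun k l h => ?_, ?_, ?_⟩
      · beta_reduce
        rw [dif_neg (show ¬k = l from fun e => absurd (e ▸ h) (lt_irrefl _)),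
          dif_neg (show ¬((k : ℕ) < (l : ℕ) ∧ ((k, l) : Fin N × Fin N) ≠ (i0, i1)) from by
            rintro ⟨e1, e2⟩; omega)]
      · beta_reduce
        rw [dif_neg hne01, dif_neg (show ¬((i0 : ℕ) < (i1 : ℕ) ∧
            ((i0, i1) : Fin N × Fin N) ≠ (i0, i1)) from fun e => e.2 rfl)]
      · beta_reduce
        rw [dif_pos rfl, dif_pos rfl]
        exact congrArg Units.val du.1.2
    · intro k
      beta_reduce
      rw [dif_pos rfl]
      exact (du.1.1 k).ne_zero
    · intro M
      apply Subtype.ext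
      funext k l
      show (if hkl : k = l then (M.1 k k : K)
        else if h2 : (k : ℕ) < (l : ℕ) ∧ ((k, l) : Fin N × Fin N) ≠ (i0, i1) then M.1 k l
        else 0) = M.1 k l
      by_cases hkl : k = l
      · subst hkl; rw [dif_pos rfl]
      · rw [dif_neg hkl]
        by_cases h2 : (k : ℕ) < (l : ℕ) ∧ ((k, l) : Fin N × Fin N) ≠ (i0, i1)
        · rw [dif_pos h2]
        · rw [dif_neg h2]
          rcases Nat.lt_trichotomy (k : ℕ) (l : ℕ) with h | h | h
          · have hkl2 : ((k, l) : Fin N × Fin N) = (i0, i1) := by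
              by_contra hne; exact h2 ⟨h, hne⟩
            rw [Prod.mk.injEq] at hkl2
            rw [hkl2.1, hkl2.2]
            exact M.2.1.2.1.symm
          · exact absurd (Fin.ext h) hkl
          · exact (M.2.1.1 k l h).symm
    · intro du
      refine Prod.ext ?_ ?_
      · apply Subtype.ext
        funext k
        apply Units.ext
        show (if hkl : k = k then (du.1.1 k : K) else _) = (du.1.1 k : K)
        rw [dif_pos rfl]
      · funext p
        obtain ⟨⟨k, l⟩, h2⟩ := p
        show (if hkl : k = l then (du.1.1 k : K)
          else if h2 : (k : ℕ) < (l : ℕ) ∧ ((k, l) : Fin N × Fin N) ≠ (i0, i1) then du.2 ⟨(k, l), h2⟩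
          else 0) = du.2 ⟨(k, l), h2⟩
        rw [dif_neg (show ¬k = l from fun e => absurd (congrArg Fin.val e)
          (Nat.ne_of_lt h2.1)), dif_pos h2]
  -- step 3 : cardinalities of the factors
  have eD : D ≃ ({l : Fin N // l ≠ i1} → Kˣ) := by
    refine ⟨fun d => fun l => d.1 l.1,
      fun f => ⟨fun l => if h : l = i1 then f ⟨i0, hne01⟩ else f ⟨l, h⟩, ?_⟩, ?_, ?_⟩
    · beta_reduce
      rw [dif_neg hne01, dif_pos rfl]
    · intro d
      apply Subtype.ext
      funext l
      show (if h : l = i1 then d.1 i0 else d.1 l) = d.1 l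
      by_cases h : l = i1
      · subst h; rw [dif_pos rfl]; exact d.2
      · rw [dif_neg h]
    · intro f
      funext l
      obtain ⟨l, hl⟩ := l
      show (if h : l = i1 then f ⟨i0, hne01⟩ else f ⟨l, h⟩) = f ⟨l, hl⟩
      rw [dif_neg hl]
  have cardD : Nat.card D = (Fintype.card K - 1) ^ (N - 1) := by
    rw [Nat.card_congr eD, Nat.card_eq_fintype_card, Fintype.card_fun]
    have h1 : Fintype.card Kˣ = Fintype.card K - 1 := by
      rw [← Nat.card_eq_fintype_card, Nat.card_units, Nat.card_eq_fintype_card]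
    have h2 : Fintype.card {l : Fin N // l ≠ i1} = N - 1 := by
      rw [Fintype.card_subtype_compl, Fintype.card_subtype_eq, Fintype.card_fin]
    rw [h1, h2]
  have hcardP : Fintype.card {p : Fin N × Fin N // (p.1 : ℕ) < (p.2 : ℕ)} = N * (N - 1) / 2 := by
    rw [Fintype.card_congr (Equiv.subtypeProdEquivSigmaSubtype fun (a b : Fin N) =>
      (a : ℕ) < (b : ℕ)), Fintype.card_sigma]
    have hfib : ∀ a : Fin N, Fintype.card {b : Fin N // (a : ℕ) < (b : ℕ)} = N - 1 - a := by
      intro a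
      rw [Fintype.card_subtype]
      have : Finset.univ.filter (fun b : Fin N => (a : ℕ) < (b : ℕ)) = Finset.Ioi a := by
        ext b
        simp only [Finset.mem_filter, Finset.mem_univ, true_and, Finset.mem_Ioi, Fin.lt_def]
      rw [this, Fin.card_Ioi]
    rw [Finset.sum_congr rfl fun a _ => hfib a,
      Fin.sum_univ_eq_sum_range (fun a => N - 1 - a) N,
      Finset.sum_range_reflect (fun j => j) N, Finset.sum_range_id]
  have e3 : {p : Fin N × Fin N // (p.1 : ℕ) < (p.2 : ℕ) ∧ p ≠ (i0, i1)} ≃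
      {x : {p : Fin N × Fin N // (p.1 : ℕ) < (p.2 : ℕ)} // ¬(x = ⟨(i0, i1), hlt01⟩)} :=
    ⟨fun p => ⟨⟨p.1, p.2.1⟩, fun h => p.2.2 (congrArg Subtype.val h)⟩,
     fun x => ⟨x.1.1, x.1.2, fun h => x.2 (Subtype.ext h)⟩, fun p => rfl, fun x => rfl⟩
  have cardU : Nat.card U = Fintype.card K ^ (N * (N - 1) / 2 - 1) := by
    rw [hU, Nat.card_eq_fintype_card, Fintype.card_fun, Fintype.card_congr e3,
      Fintype.card_subtype_compl, Fintype.card_subtype_eq, hcardP]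
  -- step 4 : put everything together
  rw [Nat.card_congr (e1.trans e2), Nat.card_prod, cardD, cardU]

end

/-- The subgroup of `GL_N(𝔽_q)` stabilizing the three flags `S1, S2, S3` has cardinality
`(q-1)^{N-1} · q^{N(N-1)/2 - 1}`. -/
theorem card_stabilizer_three_flags (K : Type*) [Field K] [Fintype K] (q N i : ℕ)
    (hq : Fintype.card K = q) (hN : 2 ≤ N) (hi1 : 1 ≤ i) (hi2 : i ≤ N - 1) :
    Nat.card {g : (Fin N → K) ≃ₗ[K] (Fin N → K) //
        ∀ j : ℕ,
          Submodule.map g.toLinearMap (S1 K N j) = S1 K N j ∧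
          Submodule.map g.toLinearMap (S2 K N i j) = S2 K N i j ∧
          Submodule.map g.toLinearMap (S3 K N i j) = S3 K N i j} =
      (q - 1) ^ (N - 1) * q ^ (N * (N - 1) / 2 - 1) := by
  subst hq
  exact card_aux i hi1 (by omega) hN
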